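/- Let H be an infinite-dimensional separable complex Hilbert space. Let τ : (H →L[ℂ] H) → ℂ be a continuous (operator-norm-bounded) ℂ-linear functional such that τ(S ∘ T) = τ(T ∘ S) for all compact operators S, T. Then τ(K) = 0 for every compact operator K; i.e., the only bounded tracial linear functional on the compact operators is zero. -/

import Mathlib

open scoped InnerProduct ComplexConjugate
open Filter Metric Topology

noncomputable section

variable {H : Type*} [NormedAddCommGroup H] [InnerProductSpace ℂ H] [CompleteSpace H]

local notation "⟪" x ", " y "⟫" => @inner ℂ _ _ x y

/-- rank one operator x ↦ ⟪f,x⟫ • a -/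
def Rk (a f : H) : H →L[ℂ] H := (innerSL ℂ f).smulRight a

lemma Rk_apply (a f x : H) : Rk a f x = ⟪f, x⟫ • a := rfl

lemma Rk_compact (a f : H) : IsCompactOperator (Rk a f : H →L[ℂ] H) := by
  have h1 : IsCompactOperator (innerSL ℂ f) := by
    refine ⟨closedBall 0 ‖f‖, isCompact_closedBall _ _, ?_⟩
    filter_upwards [closedBall_mem_nhds (0 : H) one_pos] with x hx
    simp only [Set.mem_preimage, mem_closedBall_zero_iff]
    calc ‖(innerSL ℂ f) x‖ ≤ ‖f‖ * ‖x‖ := norm_inner_le_norm f x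
    _ ≤ ‖f‖ * 1 := by
        have := mem_closedBall_zero_iff.mp hx
        exact mul_le_mul_of_nonneg_left this (norm_nonneg f)
    _ = ‖f‖ := mul_one _
  have h2 : (Rk a f : H → H) = (fun c : ℂ => c • a) ∘ (innerSL ℂ f) := rfl
  rw [show (⇑(Rk a f) : H → H) = (fun c : ℂ => c • a) ∘ (innerSL ℂ f) from rfl]
  exact h1.continuous_comp (by continuity)

lemma Rk_mul (a f b g : H) : (Rk a f) * (Rk b g) = ⟪f, b⟫ • Rk a g := by
  ext x
  simp [Rk_apply, ContinuousLinearMap.mul_apply, inner_smul_right, mul_smul]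
  rw [smul_comm]

set_option linter.unusedSectionVars false

lemma proj_norm_le {ι : Type*} {e : ι → H} (he : Orthonormal ℂ e) (s : Finset ι) :
    ‖∑ i ∈ s, Rk (e i) (e i)‖ ≤ 1 := by
  refine ContinuousLinearMap.opNorm_le_bound _ zero_le_one fun x => ?_
  rw [one_mul]
  have happ : (∑ i ∈ s, Rk (e i) (e i)) x = ∑ i ∈ s, ⟪e i, x⟫ • e i := by
    simp [Rk_apply]
  rw [happ]
  have hsq : ‖∑ i ∈ s, ⟪e i, x⟫ • e i‖ ^ 2 ≤ ‖x‖ ^ 2 := by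
    have h1 := he.inner_sum (fun i => ⟪e i, x⟫) (fun i => ⟪e i, x⟫) s
    have h2 : ‖∑ i ∈ s, ⟪e i, x⟫ • e i‖ ^ 2
        = RCLike.re (⟪∑ i ∈ s, ⟪e i, x⟫ • e i, ∑ i ∈ s, ⟪e i, x⟫ • e i⟫) := by
      rw [@inner_self_eq_norm_sq ℂ]
    rw [h2, h1]
    have h3 : RCLike.re (∑ i ∈ s, conj ⟪e i, x⟫ * ⟪e i, x⟫)
        = ∑ i ∈ s, ‖⟪e i, x⟫‖ ^ 2 := by
      rw [map_sum]
      congr 1; ext i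
      rw [RCLike.conj_mul]
      norm_cast
    rw [h3]
    exact he.sum_inner_products_le x
  exact (pow_le_pow_iff_left₀ (norm_nonneg _) (norm_nonneg x) two_ne_zero).mp hsq

end

local notation "⟪" x ", " y "⟫" => @inner ℂ _ _ x y


/-- On an infinite-dimensional separable complex Hilbert space, every bounded linear
functional that is tracial on the compact operators vanishes on all compact operators. -/
theorem tracial_functional_vanishes_on_compacts
    (H : Type*) [NormedAddCommGroup H] [InnerProductSpace ℂ H] [CompleteSpace H]
    [TopologicalSpace.SeparableSpace H] (hinf : ¬ FiniteDimensional ℂ H)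
    (τ : (H →L[ℂ] H) →L[ℂ] ℂ)
    (htr : ∀ S T : H →L[ℂ] H, IsCompactOperator S → IsCompactOperator T →
      τ (S * T) = τ (T * S))
    (K : H →L[ℂ] H) (hK : IsCompactOperator K) : τ K = 0 := by
  classical
  obtain ⟨w, b, hbw⟩ := exists_hilbertBasis ℂ H
  let e : w → H := fun i => b i
  have he : Orthonormal ℂ e := b.orthonormal
  -- w is infinite
  have hwinf : w.Infinite := by
    by_contra hfin'
    rw [Set.not_infinite] at hfin'
    apply hinf
    have hdense : (Submodule.span ℂ (Set.range ⇑b)).topologicalClosure = ⊤ := b.dense_span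
    rw [hbw, Subtype.range_coe] at hdense
    have hfd : FiniteDimensional ℂ (Submodule.span ℂ w) :=
      FiniteDimensional.span_of_finite ℂ hfin'
    have hclosed : IsClosed (↑(Submodule.span ℂ w) : Set H) :=
      (Submodule.span ℂ w).closed_of_finiteDimensional
    have htop : Submodule.span ℂ w = ⊤ := by
      rw [← hclosed.submodule_topologicalClosure_eq, hdense]
    rw [htop] at hfd
    exact Submodule.topEquiv.finiteDimensional
  have _ : Infinite ↥w := hwinf.to_subtype
  have he1 : ∀ i : ↥w, ⟪e i, e i⟫ = 1 := fun i => by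
    rw [@inner_self_eq_norm_sq_to_K ℂ, he.1 i]
    norm_num
  let i₀ : ↥w := Classical.arbitrary ↥w
  set c : ℂ := τ (Rk (e i₀) (e i₀)) with hc_def
  have hτR : ∀ a f : H, τ (Rk a f) = ⟪f, a⟫ * c := by
    intro a f
    have h1 : Rk a (e i₀) * Rk (e i₀) f = Rk a f := by
      rw [Rk_mul, he1 i₀, one_smul]
    have h2 := htr (Rk a (e i₀)) (Rk (e i₀) f) (Rk_compact _ _) (Rk_compact _ _)
    rw [h1, Rk_mul] at h2
    rw [h2, map_smul, smul_eq_mul]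
  have hc : c = 0 := by
    by_contra hc0
    obtain ⟨n, hn⟩ := exists_nat_gt (‖τ‖ / ‖c‖)
    obtain ⟨s, -, hscard⟩ := (Set.infinite_univ (α := ↥w)).exists_subset_card_eq n
    have hτP : τ (∑ i ∈ s, Rk (e i) (e i)) = (n : ℂ) * c := by
      rw [map_sum]
      have : ∀ i ∈ s, τ (Rk (e i) (e i)) = c := fun i _ => by
        rw [hτR, he1, one_mul]
      rw [Finset.sum_congr rfl this, Finset.sum_const, hscard, nsmul_eq_mul]
    have hb1 : ‖τ (∑ i ∈ s, Rk (e i) (e i))‖ ≤ ‖τ‖ := by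
      calc ‖τ (∑ i ∈ s, Rk (e i) (e i))‖ ≤ ‖τ‖ * ‖∑ i ∈ s, Rk (e i) (e i)‖ :=
            τ.le_opNorm _
      _ ≤ ‖τ‖ * 1 := mul_le_mul_of_nonneg_left (proj_norm_le he s) (norm_nonneg τ)
      _ = ‖τ‖ := mul_one _
    rw [hτP] at hb1
    have : (n : ℝ) * ‖c‖ ≤ ‖τ‖ := by
      simpa [norm_mul] using hb1
    have hlt : ‖τ‖ < (n : ℝ) * ‖c‖ := by
      rw [div_lt_iff₀ (norm_pos_iff.mpr hc0)] at hn
      exact hn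
    linarith
  have hτR0 : ∀ a f : H, τ (Rk a f) = 0 := fun a f => by
    rw [hτR, hc, mul_zero]
  -- τ vanishes on the finite-rank truncations of K
  set A := ContinuousLinearMap.adjoint K with hA
  have hPK : ∀ s : Finset ↥w, τ ((∑ i ∈ s, Rk (e i) (e i)) ∘L K) = 0 := by
    intro s
    have hcomp : (∑ i ∈ s, Rk (e i) (e i)) ∘L K = ∑ i ∈ s, Rk (e i) (A (e i)) := by
      ext x
      simp only [ContinuousLinearMap.comp_apply, ContinuousLinearMap.sum_apply, Rk_apply]
      refine Finset.sum_congr rfl fun i _ => ?_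
      rw [hA, ContinuousLinearMap.adjoint_inner_left]
    rw [hcomp, map_sum]
    simp [hτR0]
  -- norm convergence of the truncations to K
  have hconv : Tendsto (fun s : Finset ↥w => (∑ i ∈ s, Rk (e i) (e i)) ∘L K)
      atTop (𝓝 K) := by
    have hpt : ∀ z : H, Tendsto (fun s : Finset ↥w => ∑ i ∈ s, ⟪e i, z⟫ • e i)
        atTop (𝓝 z) := by
      intro z
      have h := b.hasSum_repr z
      have h' : HasSum (fun i : ↥w => ⟪e i, z⟫ • e i) z := by
        refine h.congr_fun fun i => ?_
        rw [b.repr_apply_apply]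
      exact h'
    have hScomp : IsCompact (closure ((K : H →ₗ[ℂ] H) '' closedBall 0 1)) :=
      hK.isCompact_closure_image_closedBall (f := (K : H →ₗ[ℂ] H)) 1
    rw [Metric.tendsto_atTop]
    intro ε hε
    obtain ⟨t, htfin, htsub⟩ :=
      (Metric.totallyBounded_iff.mp hScomp.totallyBounded) (ε / 6) (by positivity)
    have hev : ∀ᶠ s : Finset ↥w in atTop,
        ∀ z ∈ t, ‖z - ∑ i ∈ s, ⟪e i, z⟫ • e i‖ < ε / 6 := by
      rw [Set.Finite.eventually_all htfin]
      intro z _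
      have h3 := Metric.tendsto_nhds.mp (hpt z) (ε / 6) (by positivity)
      filter_upwards [h3] with s hs
      rw [dist_eq_norm'] at hs
      exact hs
    obtain ⟨s₀, hs₀⟩ := Filter.eventually_atTop.mp hev
    refine ⟨s₀, fun s hs => ?_⟩
    have hkey : ∀ y ∈ closure ((K : H →ₗ[ℂ] H) '' closedBall 0 1),
        ‖y - ∑ i ∈ s, ⟪e i, y⟫ • e i‖ ≤ ε / 2 := by
      intro y hy
      obtain ⟨z, hz, hyz⟩ := Set.mem_iUnion₂.mp (htsub hy)
      have h1 : ‖y - z‖ < ε / 6 := by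
        rw [mem_ball, dist_eq_norm] at hyz; exact hyz
      have h2 : ‖z - ∑ i ∈ s, ⟪e i, z⟫ • e i‖ < ε / 6 := hs₀ s hs z hz
      have h3 : ‖∑ i ∈ s, ⟪e i, z⟫ • e i - ∑ i ∈ s, ⟪e i, y⟫ • e i‖ ≤ ‖z - y‖ := by
        have heq : ∑ i ∈ s, ⟪e i, z⟫ • e i - ∑ i ∈ s, ⟪e i, y⟫ • e i
            = (∑ i ∈ s, Rk (e i) (e i)) (z - y) := by
          simp [Rk_apply, inner_sub_right, sub_smul, Finset.sum_sub_distrib]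
        rw [heq]
        calc ‖(∑ i ∈ s, Rk (e i) (e i)) (z - y)‖
            ≤ ‖∑ i ∈ s, Rk (e i) (e i)‖ * ‖z - y‖ := ContinuousLinearMap.le_opNorm _ _
        _ ≤ 1 * ‖z - y‖ := mul_le_mul_of_nonneg_right (proj_norm_le he s) (norm_nonneg _)
        _ = ‖z - y‖ := one_mul _
      have h4 : ‖z - y‖ < ε / 6 := by rwa [norm_sub_rev]
      have htri : ‖y - ∑ i ∈ s, ⟪e i, y⟫ • e i‖
          ≤ ‖y - z‖ + ‖z - ∑ i ∈ s, ⟪e i, z⟫ • e i‖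
            + ‖∑ i ∈ s, ⟪e i, z⟫ • e i - ∑ i ∈ s, ⟪e i, y⟫ • e i‖ := by
        have e1 : y - ∑ i ∈ s, ⟪e i, y⟫ • e i
            = (y - z) + (z - ∑ i ∈ s, ⟪e i, z⟫ • e i)
              + (∑ i ∈ s, ⟪e i, z⟫ • e i - ∑ i ∈ s, ⟪e i, y⟫ • e i) := by abel
        rw [e1]
        exact (norm_add_le _ _).trans (add_le_add (norm_add_le _ _) le_rfl)
      have hfin : ‖y - ∑ i ∈ s, ⟪e i, y⟫ • e i‖ ≤ ε / 6 + ε / 6 + ε / 6 :=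
        htri.trans (add_le_add (add_le_add h1.le h2.le) (h3.trans h4.le))
      linarith
    rw [dist_eq_norm]
    have hop : ‖(∑ i ∈ s, Rk (e i) (e i)) ∘L K - K‖ ≤ ε / 2 := by
      refine ContinuousLinearMap.opNorm_le_bound _ (by positivity) fun x => ?_
      rcases eq_or_ne x 0 with rfl | hx
      · simp
      · have hxpos : (0 : ℝ) < ‖x‖ := norm_pos_iff.mpr hx
        set u : H := ‖x‖⁻¹ • x with hu
        have hun : ‖u‖ = 1 := by
          rw [hu, norm_smul, norm_inv, norm_norm, inv_mul_cancel₀ hxpos.ne']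
        have hKu : K u ∈ closure ((K : H →ₗ[ℂ] H) '' closedBall 0 1) :=
          subset_closure ⟨u, by simp [hun], rfl⟩
        have hbu : ‖((∑ i ∈ s, Rk (e i) (e i)) ∘L K - K) u‖ ≤ ε / 2 := by
          have := hkey (K u) hKu
          have heq : ((∑ i ∈ s, Rk (e i) (e i)) ∘L K - K) u
              = -(K u - ∑ i ∈ s, ⟪e i, K u⟫ • e i) := by
            simp [Rk_apply, ContinuousLinearMap.sub_apply, ContinuousLinearMap.comp_apply,
              ContinuousLinearMap.sum_apply]
          rw [heq, norm_neg]
          exact this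
        have hxu : x = ‖x‖ • u := by
          rw [hu, smul_smul, mul_inv_cancel₀ hxpos.ne', one_smul]
        calc ‖((∑ i ∈ s, Rk (e i) (e i)) ∘L K - K) x‖
            = ‖x‖ * ‖((∑ i ∈ s, Rk (e i) (e i)) ∘L K - K) u‖ := by
              conv_lhs => rw [hxu]
              rw [ContinuousLinearMap.map_smul_of_tower, norm_smul, norm_norm]
        _ ≤ ‖x‖ * (ε / 2) := mul_le_mul_of_nonneg_left hbu (norm_nonneg x)
        _ = ε / 2 * ‖x‖ := mul_comm _ _
    exact lt_of_le_of_lt hop (by linarith)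
  have h1 : Tendsto (fun s : Finset ↥w => τ ((∑ i ∈ s, Rk (e i) (e i)) ∘L K))
      atTop (𝓝 (τ K)) := (τ.continuous.tendsto K).comp hconv
  have h2 : (fun s : Finset ↥w => τ ((∑ i ∈ s, Rk (e i) (e i)) ∘L K))
      = fun _ => (0 : ℂ) := funext hPK
  rw [h2] at h1
  exact tendsto_nhds_unique h1 tendsto_const_nhds
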